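/- Let f_W be an n-layer ReLU network with weight matrices W_1, …, W_n, each nonzero, and let U_1, …, U_n be matrices of the same respective dimensions satisfying ‖U_l‖₂ ≤ (1/n)·‖W_l‖₂ for every l. Then for every input x, ‖f_{W+U}(x) − f_W(x)‖₂ ≤ e · ‖x‖₂ · (∏_{l=1}^{n} ‖W_l‖₂) · Σ_{l=1}^{n} ‖U_l‖₂ / ‖W_l‖₂, where f_{W+U} is the ReLU network with weight matrices W_1 + U_1, …, W_n + U_n. -/

import Mathlib

open Matrix

/-- The spectral norm of a real matrix: its operator norm as a map between
Euclidean (`ℓ²`) spaces. -/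
noncomputable def specNorm {m k : ℕ} (A : Matrix (Fin m) (Fin k) ℝ) : ℝ :=
  ‖LinearMap.toContinuousLinearMap (Matrix.toEuclideanLin A)‖

/-- The Euclidean (`ℓ²`) norm of a vector in `ℝ^k`. -/
noncomputable def vnorm {k : ℕ} (v : Fin k → ℝ) : ℝ :=
  Real.sqrt (∑ i, (v i) ^ 2)

/-- Coordinatewise ReLU activation. -/
def relu {k : ℕ} (v : Fin k → ℝ) : Fin k → ℝ := fun i => max (v i) 0

lemma vnorm_eq_norm {k : ℕ} (v : Fin k → ℝ) :
    vnorm v = ‖(WithLp.equiv 2 (Fin k → ℝ)).symm v‖ := by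
  rw [vnorm, EuclideanSpace.norm_eq]
  congr 1
  refine Finset.sum_congr rfl fun i _ => ?_
  rw [WithLp.equiv_symm_apply, PiLp.toLp_apply, Real.norm_eq_abs, sq_abs]

lemma vnorm_nonneg {k : ℕ} (v : Fin k → ℝ) : 0 ≤ vnorm v := Real.sqrt_nonneg _

lemma specNorm_nonneg {m k : ℕ} (A : Matrix (Fin m) (Fin k) ℝ) : 0 ≤ specNorm A :=
  norm_nonneg _

lemma specNorm_pos {m k : ℕ} {A : Matrix (Fin m) (Fin k) ℝ} (h : A ≠ 0) :
    0 < specNorm A := by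
  rw [specNorm, norm_pos_iff]
  intro h0
  exact h (Matrix.toEuclideanLin.map_eq_zero_iff.mp
    (LinearMap.toContinuousLinearMap.map_eq_zero_iff.mp h0))

lemma specNorm_add_le {m k : ℕ} (A B : Matrix (Fin m) (Fin k) ℝ) :
    specNorm (A + B) ≤ specNorm A + specNorm B := by
  simp only [specNorm, map_add]
  exact norm_add_le _ _

lemma vnorm_mulVec_le {m k : ℕ} (A : Matrix (Fin m) (Fin k) ℝ) (v : Fin k → ℝ) :
    vnorm (A *ᵥ v) ≤ specNorm A * vnorm v := by
  rw [vnorm_eq_norm, vnorm_eq_norm, WithLp.equiv_symm_apply, ← Matrix.toEuclideanLin_apply_piLp_toLp]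
  exact (LinearMap.toContinuousLinearMap (Matrix.toEuclideanLin A)).le_opNorm _

lemma vnorm_add_le {k : ℕ} (v w : Fin k → ℝ) : vnorm (v + w) ≤ vnorm v + vnorm w := by
  rw [vnorm_eq_norm, vnorm_eq_norm, vnorm_eq_norm]
  exact norm_add_le ((WithLp.equiv 2 (Fin k → ℝ)).symm v) ((WithLp.equiv 2 (Fin k → ℝ)).symm w)

lemma vnorm_mono_sq {k : ℕ} {v w : Fin k → ℝ} (h : ∀ i, (v i) ^ 2 ≤ (w i) ^ 2) :
    vnorm v ≤ vnorm w :=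
  Real.sqrt_le_sqrt (Finset.sum_le_sum fun i _ => h i)

lemma vnorm_relu_sub_relu_le {k : ℕ} (v w : Fin k → ℝ) :
    vnorm (relu v - relu w) ≤ vnorm (v - w) := by
  refine vnorm_mono_sq fun i => ?_
  simp only [Pi.sub_apply, relu]
  rw [← sq_abs (max (v i) 0 - max (w i) 0), ← sq_abs (v i - w i)]
  exact pow_le_pow_left₀ (abs_nonneg _) (abs_max_sub_max_le_abs (v i) (w i) 0) 2

lemma vnorm_relu_le {k : ℕ} (v : Fin k → ℝ) : vnorm (relu v) ≤ vnorm v := by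
  refine vnorm_mono_sq fun i => ?_
  simp only [relu]
  rcases le_or_gt 0 (v i) with h | h
  · rw [max_eq_left h]
  · rw [max_eq_right h.le]; simpa using sq_nonneg (v i)


/-- `actStack n d W x = act(W_n · act(W_{n-1} · ⋯ · act(W_1 · x)))`:
the activated output after `n` layers (activation applied after every layer). -/
def actStack : (n : ℕ) → (d : Fin (n + 1) → ℕ) →
    ((l : Fin n) → Matrix (Fin (d l.succ)) (Fin (d l.castSucc)) ℝ) →
    (Fin (d 0) → ℝ) → (Fin (d (Fin.last n)) → ℝ)
  | 0, _, _, x => x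
  | n + 1, d, W, x =>
      relu ((W (Fin.last n)) *ᵥ
        actStack n (fun l => d l.castSucc) (fun l => W l.castSucc) x)

/-- The `n`-layer ReLU network with weight matrices `W_1, …, W_n`:
`f_W(x) = W_n · act(W_{n-1} · ⋯ · act(W_1 · x) ⋯)` (no activation on the last
layer). For `n = 0` it is the identity. -/
def reluNet : (n : ℕ) → (d : Fin (n + 1) → ℕ) →
    ((l : Fin n) → Matrix (Fin (d l.succ)) (Fin (d l.castSucc)) ℝ) →
    (Fin (d 0) → ℝ) → (Fin (d (Fin.last n)) → ℝ)
  | 0, _, _, x => x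
  | n + 1, d, W, x =>
      (W (Fin.last n)) *ᵥ
        actStack n (fun l => d l.castSucc) (fun l => W l.castSucc) x


lemma vnorm_actStack_le (n : ℕ) : ∀ (d : Fin (n + 1) → ℕ)
    (W : (l : Fin n) → Matrix (Fin (d l.succ)) (Fin (d l.castSucc)) ℝ)
    (x : Fin (d 0) → ℝ),
    vnorm (actStack n d W x) ≤ (∏ l, specNorm (W l)) * vnorm x := by
  induction n with
  | zero => intro d W x; simp [actStack]
  | succ n IH =>
    intro d W x
    simp only [actStack]
    have IH' := IH (fun l => d l.castSucc) (fun l => W l.castSucc) x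
    have h2 := mul_le_mul_of_nonneg_left IH' (specNorm_nonneg (W (Fin.last n)))
    have h3 := (vnorm_mulVec_le (W (Fin.last n))
      (actStack n (fun l => d l.castSucc) (fun l => W l.castSucc) x)).trans h2
    have h4 := (vnorm_relu_le ((W (Fin.last n)) *ᵥ
      actStack n (fun l => d l.castSucc) (fun l => W l.castSucc) x)).trans h3
    refine h4.trans (le_of_eq ?_)
    rw [Fin.prod_univ_castSucc]
    ring
    rfl

lemma step_bound {m k : ℕ} (A B : Matrix (Fin m) (Fin k) ℝ) (z y : Fin k → ℝ) :
    vnorm ((A + B) *ᵥ z - A *ᵥ y) ≤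
      (specNorm A + specNorm B) * vnorm (z - y) + specNorm B * vnorm y := by
  have hz : (A + B) *ᵥ z - A *ᵥ y = (A + B) *ᵥ (z - y) + B *ᵥ y := by
    rw [Matrix.mulVec_sub, Matrix.add_mulVec, Matrix.add_mulVec]
    abel
  rw [hz]
  calc vnorm ((A + B) *ᵥ (z - y) + B *ᵥ y)
      ≤ vnorm ((A + B) *ᵥ (z - y)) + vnorm (B *ᵥ y) := vnorm_add_le _ _
    _ ≤ specNorm (A + B) * vnorm (z - y) + specNorm B * vnorm y :=
        add_le_add (vnorm_mulVec_le _ _) (vnorm_mulVec_le _ _)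
    _ ≤ (specNorm A + specNorm B) * vnorm (z - y) + specNorm B * vnorm y := by
        have := specNorm_add_le A B
        nlinarith [vnorm_nonneg (z - y)]

lemma alg {n : ℕ} {a b Δ V P S X ε : ℝ} (ha : 0 < a) (hb : 0 ≤ b) (hba : b ≤ ε * a)
    (hΔ0 : 0 ≤ Δ) (hΔ : Δ ≤ (1 + ε) ^ n * P * X * S) (hV : V ≤ P * X)
    (hP : 0 ≤ P) (hX : 0 ≤ X) (hε : 0 ≤ ε) :
    (a + b) * Δ + b * V ≤ (1 + ε) ^ (n + 1) * (P * a) * X * (S + b / a) := by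
  have hpow : (1 : ℝ) ≤ (1 + ε) ^ (n + 1) := one_le_pow₀ (by linarith)
  have hane : a ≠ 0 := ha.ne'
  have key : (1 + ε) ^ (n + 1) * (P * a) * X * (S + b / a) =
      (1 + ε) ^ (n + 1) * (P * a) * X * S + (1 + ε) ^ (n + 1) * (P * X * b) := by
    field_simp
  rw [key]
  have h1 : (a + b) * Δ ≤ (1 + ε) * a * Δ := by nlinarith
  have h2 : (1 + ε) * a * Δ ≤ (1 + ε) * a * ((1 + ε) ^ n * P * X * S) :=
    mul_le_mul_of_nonneg_left hΔ (by positivity)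
  have h3 : (1 + ε) * a * ((1 + ε) ^ n * P * X * S) =
      (1 + ε) ^ (n + 1) * (P * a) * X * S := by ring
  have h4 : b * V ≤ P * X * b := by nlinarith
  have h5 : P * X * b ≤ (1 + ε) ^ (n + 1) * (P * X * b) := by
    nlinarith [mul_nonneg (mul_nonneg hP hX) hb]
  linarith

lemma actStack_perturb (n : ℕ) : ∀ (d : Fin (n + 1) → ℕ)
    (W U : (l : Fin n) → Matrix (Fin (d l.succ)) (Fin (d l.castSucc)) ℝ)
    (ε : ℝ), 0 ≤ ε → (∀ l, W l ≠ 0) → (∀ l, specNorm (U l) ≤ ε * specNorm (W l)) →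
    ∀ (x : Fin (d 0) → ℝ),
    vnorm (actStack n d (fun l => W l + U l) x - actStack n d W x) ≤
      (1 + ε) ^ n * (∏ l, specNorm (W l)) * vnorm x *
        ∑ l, specNorm (U l) / specNorm (W l) := by
  induction n with
  | zero => intro d W U ε hε hW hU x; simp [actStack, vnorm]
  | succ n IH =>
    intro d W U ε hε hW hU x
    simp only [actStack]
    have IH' := IH (fun l => d l.castSucc) (fun l => W l.castSucc) (fun l => U l.castSucc)
      ε hε (fun l => hW l.castSucc) (fun l => hU l.castSucc) x
    have hy := vnorm_actStack_le n (fun l => d l.castSucc) (fun l => W l.castSucc) x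
    have hs := step_bound (W (Fin.last n)) (U (Fin.last n))
      (actStack n (fun l => d l.castSucc) (fun l => W l.castSucc + U l.castSucc) x)
      (actStack n (fun l => d l.castSucc) (fun l => W l.castSucc) x)
    have halg := alg (n := n) (specNorm_pos (hW (Fin.last n)))
      (specNorm_nonneg (U (Fin.last n))) (hU (Fin.last n)) (vnorm_nonneg _) IH' hy
      (Finset.prod_nonneg fun l _ => specNorm_nonneg _) (vnorm_nonneg x) hε
    have hrelu := vnorm_relu_sub_relu_le
      ((W (Fin.last n) + U (Fin.last n)) *ᵥ
        actStack n (fun l => d l.castSucc) (fun l => W l.castSucc + U l.castSucc) x)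
      (W (Fin.last n) *ᵥ actStack n (fun l => d l.castSucc) (fun l => W l.castSucc) x)
    refine (hrelu.trans (hs.trans halg)).trans (le_of_eq ?_)
    rw [Fin.prod_univ_castSucc, Fin.sum_univ_castSucc]
    rfl

/-- weight-perturbation bound, Neyshabur et al.: if every
`W_l ≠ 0` and `‖U_l‖₂ ≤ (1/n)‖W_l‖₂`, then for every input `x`,
`‖f_{W+U}(x) - f_W(x)‖₂ ≤ e · ‖x‖₂ · (∏_l ‖W_l‖₂) · ∑_l ‖U_l‖₂/‖W_l‖₂`. -/
theorem vnorm_reluNet_perturb_le {n : ℕ} (hn : 1 ≤ n) (d : Fin (n + 1) → ℕ)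
    (W U : (l : Fin n) → Matrix (Fin (d l.succ)) (Fin (d l.castSucc)) ℝ)
    (hW : ∀ l, W l ≠ 0)
    (hU : ∀ l, specNorm (U l) ≤ (1 / (n : ℝ)) * specNorm (W l))
    (x : Fin (d 0) → ℝ) :
    vnorm (reluNet n d (fun l => W l + U l) x - reluNet n d W x) ≤
      Real.exp 1 * vnorm x * (∏ l, specNorm (W l)) *
        ∑ l, specNorm (U l) / specNorm (W l) := by
  obtain ⟨m, rfl⟩ : ∃ m, n = m + 1 := ⟨n - 1, (Nat.succ_pred_eq_of_pos hn).symm⟩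
  set ε : ℝ := 1 / ((m : ℝ) + 1) with hεdef
  have hε : 0 ≤ ε := by positivity
  have hU' : ∀ l, specNorm (U l) ≤ ε * specNorm (W l) := by
    intro l
    have := hU l
    push_cast at this
    exact this
  simp only [reluNet]
  have IH' := actStack_perturb m (fun l => d l.castSucc) (fun l => W l.castSucc)
    (fun l => U l.castSucc) ε hε (fun l => hW l.castSucc) (fun l => hU' l.castSucc) x
  have hy := vnorm_actStack_le m (fun l => d l.castSucc) (fun l => W l.castSucc) x
  have hs := step_bound (W (Fin.last m)) (U (Fin.last m))
    (actStack m (fun l => d l.castSucc) (fun l => W l.castSucc + U l.castSucc) x)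
    (actStack m (fun l => d l.castSucc) (fun l => W l.castSucc) x)
  have halg := alg (n := m) (specNorm_pos (hW (Fin.last m)))
    (specNorm_nonneg (U (Fin.last m))) (hU' (Fin.last m)) (vnorm_nonneg _) IH' hy
    (Finset.prod_nonneg fun l _ => specNorm_nonneg _) (vnorm_nonneg x) hε
  have hC : (1 + ε) ^ (m + 1) ≤ Real.exp 1 := by
    have h2 : (1 : ℝ) + ε ≤ Real.exp ε := by
      have := Real.add_one_le_exp ε
      linarith
    calc (1 + ε) ^ (m + 1) ≤ (Real.exp ε) ^ (m + 1) :=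
          pow_le_pow_left₀ (by positivity) h2 _
      _ = Real.exp 1 := by
          rw [← Real.exp_nat_mul]
          congr 1
          rw [hεdef]
          push_cast
          field_simp
  have hPall : (0 : ℝ) ≤ ∏ l, specNorm (W l) := Finset.prod_nonneg fun l _ => specNorm_nonneg _
  have hSall : (0 : ℝ) ≤ ∑ l, specNorm (U l) / specNorm (W l) :=
    Finset.sum_nonneg fun l _ => div_nonneg (specNorm_nonneg _) (specNorm_nonneg _)
  have hfin : (1 + ε) ^ (m + 1) * (∏ l, specNorm (W l)) * vnorm x *
      (∑ l, specNorm (U l) / specNorm (W l)) ≤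
      Real.exp 1 * vnorm x * (∏ l, specNorm (W l)) *
        ∑ l, specNorm (U l) / specNorm (W l) := by
    have := mul_le_mul_of_nonneg_right
      (mul_le_mul_of_nonneg_right (mul_le_mul_of_nonneg_right hC hPall) (vnorm_nonneg x)) hSall
    nlinarith [this]
  refine (hs.trans halg).trans (le_of_eq ?_ |>.trans hfin)
  rw [Fin.prod_univ_castSucc, Fin.sum_univ_castSucc]
  rfl
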